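/- There exist C > 0 and ε₀ > 0 such that for all ε ∈ (0, ε₀), all θ ∈ [0,π], and all pairs (ξ,c) with ξ ∈ [−ξ₁, ξ₂], ξ < c, and |ξ| ≤ c − ξ ≤ 3(ξ₁+ξ₂): |S(ξ,θ;c) − 𝓘(ξ,θ;c)| ≤ C. -/

import Mathlib

open Real MeasureTheory Set

noncomputable section

/-- The distance parameter `a_ε`. -/
def aEps (r₁ r₂ ε : ℝ) : ℝ :=
  Real.sqrt ε * Real.sqrt ((2*r₁+ε)*(2*r₂+ε)*(2*r₁+2*r₂+ε)) / (2*(r₁+r₂+ε))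

def xi (r : ℝ) (r₁ r₂ ε : ℝ) : ℝ := Real.arsinh (aEps r₁ r₂ ε / r)

/-- `w θ ξ = √(cosh ξ − cos θ)`. -/
def w (θ ξ : ℝ) : ℝ := Real.sqrt (Real.cosh ξ - Real.cos θ)

/-- The series `S(ξ,θ;c)`. -/
def S (s₀ ξ θ c : ℝ) : ℝ := ∑' m : ℕ, w θ ξ / w θ (ξ - 2 * m * s₀ - c)

/-- The integral `𝓘(ξ,θ;c)`. -/
def I (s₀ ξ θ c : ℝ) : ℝ := (1 / (2 * s₀)) * ∫ t in Set.Ioi (0:ℝ), w θ ξ / w θ (ξ - t - c)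

lemma key_sum_int (g : ℝ → ℝ) (hmono : AntitoneOn g (Set.Ici 0))
    (hpos : ∀ x ∈ Set.Ici (0:ℝ), 0 ≤ g x) (hint : IntegrableOn g (Set.Ioi 0)) :
    |(∑' n : ℕ, g n) - ∫ x in Set.Ioi (0:ℝ), g x| ≤ g 0 := by
  have hIoc : ∀ n : ℕ, (∫ x in (0:ℝ)..n, g x) ≤ ∫ x in Set.Ioi (0:ℝ), g x := by
    intro n
    rw [intervalIntegral.integral_of_le (by positivity)]
    refine setIntegral_mono_set hint ?_ (HasSubset.Subset.eventuallyLE Ioc_subset_Ioi_self)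
    exact (ae_restrict_iff' measurableSet_Ioi).2 (ae_of_all _ fun x hx => hpos x (Set.mem_Ici.mpr (le_of_lt hx)))
  have hanti : ∀ n : ℕ, AntitoneOn g (Set.Icc (0:ℝ) (0 + n)) :=
    fun n => hmono.mono (fun x hx => hx.1)
  have hsum_le : ∀ n : ℕ, (∑ i ∈ Finset.range n, g ((i:ℝ) + 1)) ≤ ∫ x in Set.Ioi (0:ℝ), g x := by
    intro n
    have := (hanti n).sum_le_integral
    simp only [zero_add] at this ⊢
    refine le_trans (le_of_eq ?_) ((this.trans (by simpa using hIoc n)))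
    refine Finset.sum_congr rfl fun i _ => ?_
    push_cast
    ring_nf
  have hnn : ∀ m : ℕ, 0 ≤ g ((m:ℝ) + 1) := fun m => hpos _ (Set.mem_Ici.mpr (by positivity))
  have hsummable1 : Summable (fun m : ℕ => g ((m:ℝ) + 1)) :=
    summable_of_sum_range_le hnn hsum_le
  have hsummable : Summable (fun m : ℕ => g (m:ℝ)) := by
    rw [← summable_nat_add_iff 1]
    convert hsummable1 using 2 with m
    · rfl
    push_cast; ring_nf
  have htsum1 : (∑' m : ℕ, g ((m:ℝ) + 1)) ≤ ∫ x in Set.Ioi (0:ℝ), g x :=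
    Real.tsum_le_of_sum_range_le hnn hsum_le
  have hsplit : (∑' m : ℕ, g (m:ℝ)) = g 0 + ∑' m : ℕ, g ((m:ℝ) + 1) := by
    rw [hsummable.tsum_eq_zero_add, Nat.cast_zero]
    congr 1
    refine tsum_congr fun m => ?_
    push_cast; ring_nf
  have hlower : (∫ x in Set.Ioi (0:ℝ), g x) ≤ ∑' m : ℕ, g (m:ℝ) := by
    have htend : Filter.Tendsto (fun n : ℕ => ∫ x in (0:ℝ)..n, g x) Filter.atTop
        (nhds (∫ x in Set.Ioi (0:ℝ), g x)) :=
      intervalIntegral_tendsto_integral_Ioi 0 hint tendsto_natCast_atTop_atTop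
    refine le_of_tendsto htend (Filter.Eventually.of_forall fun n => ?_)
    have h1 := (hanti n).integral_le_sum
    simp only [zero_add] at h1
    refine h1.trans ?_
    exact hsummable.sum_le_tsum (Finset.range n)
      (fun i _ => hpos _ (Set.mem_Ici.mpr (by positivity)))
  rw [abs_le]
  constructor
  · linarith [htsum1, hsplit]
  · linarith [hlower]

lemma main_aux (s θ ξ c : ℝ) (hs : 0 < s) (hlt : ξ < c) (habs : |ξ| ≤ c - ξ) :
    |S s ξ θ c - I s ξ θ c| ≤ 1 := by
  have hd : 0 < c - ξ := by linarith
  have hcos : Real.cos θ ≤ 1 := Real.cos_le_one θ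
  have hden0 : ∀ x : ℝ, x ≤ ξ - c → 0 < Real.cosh x - Real.cos θ := by
    intro x hx
    have hx0 : x < 0 := lt_of_le_of_lt hx (by linarith)
    have h1 : Real.cosh (ξ - c) ≤ Real.cosh x := by
      rw [Real.cosh_le_cosh, abs_of_neg (show ξ - c < 0 by linarith), abs_of_neg hx0]
      linarith
    have h2 : 1 < Real.cosh (ξ - c) := Real.one_lt_cosh.mpr (by intro h; linarith [h ▸ hd])
    linarith
  have hA : 0 ≤ w θ ξ := Real.sqrt_nonneg _
  set f : ℝ → ℝ := fun u => w θ ξ / w θ (ξ - 2*s*u - c) with hf_def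
  have harg : ∀ u : ℝ, 0 ≤ u → ξ - 2*s*u - c ≤ ξ - c := by
    intro u hu; nlinarith
  have hwpos : ∀ u : ℝ, 0 ≤ u → 0 < w θ (ξ - 2*s*u - c) := by
    intro u hu
    exact Real.sqrt_pos.mpr (hden0 _ (harg u hu))
  have hfnn : ∀ u ∈ Set.Ici (0:ℝ), 0 ≤ f u := fun u hu => div_nonneg hA (hwpos u hu).le
  -- antitone
  have hanti : AntitoneOn f (Set.Ici 0) := by
    intro u hu v hv huv
    have hden_le : w θ (ξ - 2*s*u - c) ≤ w θ (ξ - 2*s*v - c) := by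
      apply Real.sqrt_le_sqrt
      have : Real.cosh (ξ - 2*s*u - c) ≤ Real.cosh (ξ - 2*s*v - c) := by
        rw [Real.cosh_le_cosh,
          abs_of_neg (show ξ - 2*s*u - c < 0 from lt_of_le_of_lt (harg u hu) (by linarith)),
          abs_of_neg (show ξ - 2*s*v - c < 0 from lt_of_le_of_lt (harg v hv) (by linarith))]
        nlinarith
      linarith
    exact div_le_div_of_nonneg_left hA (hwpos u hu) hden_le
  -- continuity
  have hcont : ContinuousOn f (Set.Ici 0) := by
    apply ContinuousOn.div continuousOn_const
    · exact (Real.continuous_sqrt.comp ((Real.continuous_cosh.comp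
        (by continuity)).sub continuous_const)).continuousOn
    · exact fun u hu => (hwpos u hu).ne'
  -- integrability via exponential bound
  set κ : ℝ := (1 - Real.exp (-(2*s))) / 2 with hκ_def
  have hκ : 0 < κ := by
    have : Real.exp (-(2*s)) < 1 := Real.exp_lt_one_iff.mpr (by linarith)
    rw [hκ_def]; linarith
  set C1 : ℝ := f 0 * Real.exp s + w θ ξ / (Real.sqrt 2 * κ) with hC1_def
  have hf0nn : 0 ≤ f 0 := hfnn 0 (Set.mem_Ici.mpr le_rfl)
  have hterm2 : 0 ≤ w θ ξ / (Real.sqrt 2 * κ) := by positivity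
  have hbound : ∀ u ∈ Set.Ioi (0:ℝ), ‖f u‖ ≤ C1 * Real.exp (-s * u) := by
    intro u hu
    have hu0 : 0 ≤ u := le_of_lt hu
    rw [Real.norm_eq_abs, abs_of_nonneg (hfnn u hu0)]
    rcases le_total u 1 with h1 | h1
    · have h2 : f u ≤ f 0 := hanti (Set.mem_Ici.mpr le_rfl) (Set.mem_Ici.mpr hu0) hu0
      have h3 : (1:ℝ) ≤ Real.exp s * Real.exp (-s * u) := by
        rw [← Real.exp_add]
        refine Real.one_le_exp (by nlinarith)
      have h4 : f u ≤ f 0 * (Real.exp s * Real.exp (-s * u)) :=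
        h2.trans (le_mul_of_one_le_right hf0nn h3)
      have h5 : 0 ≤ w θ ξ / (Real.sqrt 2 * κ) * Real.exp (-s * u) :=
        mul_nonneg hterm2 (Real.exp_pos _).le
      rw [hC1_def]
      nlinarith
    · -- u ≥ 1 : decay estimate
      have hsinh : κ * Real.exp (s * u) ≤ Real.sinh (s * u) := by
        rw [Real.sinh_eq, hκ_def]
        have he : Real.exp (-(s*u)) ≤ Real.exp (-(2*s)) * Real.exp (s*u) := by
          rw [← Real.exp_add]
          apply Real.exp_le_exp.mpr
          nlinarith
        nlinarith [Real.exp_pos (s*u)]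
      have hcosh : 2 * Real.sinh (s*u) ^ 2 ≤ Real.cosh (ξ - 2*s*u - c) - Real.cos θ := by
        have e1 : Real.cosh (2*(s*u)) = 2 * Real.sinh (s*u)^2 + 1 := by
          rw [Real.cosh_two_mul, Real.cosh_sq]; ring
        have e2 : Real.cosh (2*(s*u)) ≤ Real.cosh (ξ - 2*s*u - c) := by
          rw [Real.cosh_le_cosh, abs_of_nonneg (show (0:ℝ) ≤ 2*(s*u) by positivity),
            abs_of_neg (show ξ - 2*s*u - c < 0 from
              lt_of_le_of_lt (harg u hu0) (by linarith))]
          nlinarith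
        nlinarith
      have hwge : Real.sqrt 2 * κ * Real.exp (s * u) ≤ w θ (ξ - 2*s*u - c) := by
        unfold w
        rw [show Real.sqrt 2 * κ * Real.exp (s*u)
            = Real.sqrt 2 * (κ * Real.exp (s*u)) by ring]
        have hsnn : (0:ℝ) ≤ Real.sinh (s*u) := Real.sinh_nonneg_iff.mpr (by positivity)
        have h2 : Real.sqrt 2 * (κ * Real.exp (s*u))
            ≤ Real.sqrt 2 * Real.sinh (s*u) :=
          mul_le_mul_of_nonneg_left hsinh (Real.sqrt_nonneg 2)
        refine h2.trans ?_
        rw [← Real.sqrt_sq hsnn, ← Real.sqrt_mul (by norm_num)]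
        apply Real.sqrt_le_sqrt
        nlinarith
      have hle : f u ≤ w θ ξ / (Real.sqrt 2 * κ * Real.exp (s * u)) :=
        div_le_div_of_nonneg_left hA (by positivity) hwge
      have heq : w θ ξ / (Real.sqrt 2 * κ * Real.exp (s * u))
          = w θ ξ / (Real.sqrt 2 * κ) * Real.exp (-s * u) := by
        rw [neg_mul, Real.exp_neg]
        have h2 : Real.sqrt 2 * κ ≠ 0 := by positivity
        field_simp
      refine hle.trans ?_
      rw [heq]
      have h6 : w θ ξ / (Real.sqrt 2 * κ) ≤ C1 := by
        rw [hC1_def]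
        nlinarith [Real.exp_pos s]
      exact mul_le_mul_of_nonneg_right h6 (Real.exp_pos _).le
  have hint : IntegrableOn f (Set.Ioi 0) := by
    refine Integrable.mono' ((exp_neg_integrableOn_Ioi 0 hs).const_mul C1) ?_ ?_
    · exact (hcont.mono Ioi_subset_Ici_self).aestronglyMeasurable measurableSet_Ioi
    · exact (ae_restrict_iff' measurableSet_Ioi).2 (ae_of_all _ hbound)
  -- identify S and I with sum/integral of f
  have hS : S s ξ θ c = ∑' m : ℕ, f m := by
    unfold S
    exact tsum_congr fun m => by rw [hf_def]; ring_nf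
  have hI : I s ξ θ c = ∫ u in Set.Ioi (0:ℝ), f u := by
    unfold I
    have h := integral_comp_mul_left_Ioi (fun t => w θ ξ / w θ (ξ - t - c)) 0
      (show (0:ℝ) < 2*s by positivity)
    rw [mul_zero] at h
    rw [show (fun u : ℝ => f u) = fun u => (fun t => w θ ξ / w θ (ξ - t - c)) (2*s*u) from rfl,
      h, smul_eq_mul, one_div]
  -- the bound f 0 ≤ 1
  have hf0le : f 0 ≤ 1 := by
    rw [hf_def]
    simp only
    rw [div_le_one (hwpos 0 le_rfl)]
    unfold w
    apply Real.sqrt_le_sqrt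
    have h7 : Real.cosh ξ ≤ Real.cosh (ξ - 2*s*0 - c) := by
      rw [Real.cosh_le_cosh, show ξ - 2*s*0 - c = ξ - c by ring,
        abs_of_neg (show ξ - c < 0 by linarith)]
      linarith [habs]
    linarith
  calc |S s ξ θ c - I s ξ θ c| = |(∑' m : ℕ, f m) - ∫ u in Set.Ioi (0:ℝ), f u| := by
        rw [hS, hI]
    _ ≤ f 0 := key_sum_int f hanti hfnn hint
    _ ≤ 1 := hf0le

theorem stmt11 (r₁ r₂ : ℝ) (hr₁ : 0 < r₁) (hr₂ : 0 < r₂) :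
    ∃ C > 0, ∃ ε₀ > 0, ∀ ε ∈ Set.Ioo 0 ε₀, ∀ θ ∈ Set.Icc 0 Real.pi,
      ∀ ξ ∈ Set.Icc (-(xi r₁ r₁ r₂ ε)) (xi r₂ r₁ r₂ ε), ∀ c : ℝ, ξ < c →
        |ξ| ≤ c - ξ → c - ξ ≤ 3 * (xi r₁ r₁ r₂ ε + xi r₂ r₁ r₂ ε) →
        |S (xi r₁ r₁ r₂ ε + xi r₂ r₁ r₂ ε) ξ θ c -
          I (xi r₁ r₁ r₂ ε + xi r₂ r₁ r₂ ε) ξ θ c| ≤ C := by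
  refine ⟨1, one_pos, 1, one_pos, ?_⟩
  rintro ε ⟨hε0, hε1⟩ θ ⟨hθ0, hθπ⟩ ξ ⟨hξl, hξr⟩ c hlt habs hup
  have haeps : 0 < aEps r₁ r₂ ε := by
    unfold aEps
    have h1 : (0:ℝ) < (2*r₁+ε)*(2*r₂+ε)*(2*r₁+2*r₂+ε) := by positivity
    positivity
  have hx1 : 0 < xi r₁ r₁ r₂ ε := Real.arsinh_pos_iff.mpr (by positivity)
  have hx2 : 0 < xi r₂ r₁ r₂ ε := Real.arsinh_pos_iff.mpr (by positivity)
  exact main_aux _ θ ξ c (by positivity) hlt habs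


end
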